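/- In the Clique vs. Independent Set communication problem on a graph G with n vertices, where Alice holds a clique K and Bob holds an independent set I and they must decide whether K ∩ I ≠ ∅, there is a deterministic protocol using O(log² n) bits. -/

import Mathlib

/-- A deterministic two-party communication protocol with inputs of types `α` (Alice)
and `β` (Bob). -/
inductive Protocol (α β : Type) where
  | leaf : Bool → Protocol α β
  | alice : (α → Bool) → Protocol α β → Protocol α β → Protocol α β
  | bob : (β → Bool) → Protocol α β → Protocol α β → Protocol α β

namespace Protocol

/-- Worst-case number of bits exchanged. -/
def cost {α β : Type} : Protocol α β → ℕ
  | leaf _ => 0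
  | alice _ t0 t1 => 1 + max t0.cost t1.cost
  | bob _ t0 t1 => 1 + max t0.cost t1.cost

/-- The output of a protocol on inputs `a`, `b`. -/
def eval {α β : Type} : Protocol α β → α → β → Bool
  | leaf c, _, _ => c
  | alice f t0 t1, a, b => if f a then t1.eval a b else t0.eval a b
  | bob f t0 t1, a, b => if f b then t1.eval a b else t0.eval a b

end Protocol

namespace CIS
open Classical Finset

/-- Alice sends the `k` low bits of `f a`, then they continue. -/
noncomputable def asend {α β : Type} : ℕ → (α → ℕ) → (ℕ → Protocol α β) → Protocol α β
  | 0, _, cont => cont 0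
  | k+1, f, cont =>
      .alice (fun a => decide (f a % 2 = 1))
        (asend k (fun a => f a / 2) (fun m => cont (2*m)))
        (asend k (fun a => f a / 2) (fun m => cont (2*m+1)))

/-- Bob sends the `k` low bits of `f b`, then they continue. -/
noncomputable def bsend {α β : Type} : ℕ → (β → ℕ) → (ℕ → Protocol α β) → Protocol α β
  | 0, _, cont => cont 0
  | k+1, f, cont =>
      .bob (fun b => decide (f b % 2 = 1))
        (bsend k (fun b => f b / 2) (fun m => cont (2*m)))
        (bsend k (fun b => f b / 2) (fun m => cont (2*m+1)))

lemma mod2pow (x k : ℕ) : x % 2^(k+1) = 2 * (x/2 % 2^k) + x % 2 := by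
  rw [pow_succ', Nat.mod_mul]; ring

lemma asend_eval {α β : Type} (k : ℕ) (f : α → ℕ) (cont : ℕ → Protocol α β) (a : α) (b : β) :
    (asend k f cont).eval a b = (cont (f a % 2^k)).eval a b := by
  induction k generalizing f cont with
  | zero => simp [asend, Nat.mod_one]
  | succ k ih =>
      simp only [asend, Protocol.eval, ih, mod2pow]
      rcases Nat.mod_two_eq_zero_or_one (f a) with h | h <;> simp [h]

lemma bsend_eval {α β : Type} (k : ℕ) (f : β → ℕ) (cont : ℕ → Protocol α β) (a : α) (b : β) :
    (bsend k f cont).eval a b = (cont (f b % 2^k)).eval a b := by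
  induction k generalizing f cont with
  | zero => simp [bsend, Nat.mod_one]
  | succ k ih =>
      simp only [bsend, Protocol.eval, ih, mod2pow]
      rcases Nat.mod_two_eq_zero_or_one (f b) with h | h <;> simp [h]

lemma asend_cost {α β : Type} (k : ℕ) (f : α → ℕ) (cont : ℕ → Protocol α β) (c : ℕ)
    (hc : ∀ m, (cont m).cost ≤ c) : (asend k f cont).cost ≤ k + c := by
  induction k generalizing f cont with
  | zero => simpa [asend] using hc 0
  | succ k ih =>
      simp only [asend, Protocol.cost]
      have h0 := ih (fun a => f a / 2) (fun m => cont (2*m)) (fun m => hc _)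
      have h1 := ih (fun a => f a / 2) (fun m => cont (2*m+1)) (fun m => hc _)
      omega

lemma bsend_cost {α β : Type} (k : ℕ) (f : β → ℕ) (cont : ℕ → Protocol α β) (c : ℕ)
    (hc : ∀ m, (cont m).cost ≤ c) : (bsend k f cont).cost ≤ k + c := by
  induction k generalizing f cont with
  | zero => simpa [bsend] using hc 0
  | succ k ih =>
      simp only [bsend, Protocol.cost]
      have h0 := ih (fun b => f b / 2) (fun m => cont (2*m)) (fun m => hc _)
      have h1 := ih (fun b => f b / 2) (fun m => cont (2*m+1)) (fun m => hc _)
      omega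

variable {V : Type} [Fintype V] [DecidableEq V] (G : SimpleGraph V)

noncomputable def deg (S : Finset V) (v : V) : ℕ := (S.filter (fun u => G.Adj v u)).card

noncomputable def lowSet (S K : Finset V) : Finset V :=
  (K ∩ S).filter (fun v => 2 * deg G S v < S.card)

noncomputable def highSet (S I : Finset V) : Finset V :=
  (I ∩ S).filter (fun v => S.card ≤ 2 * deg G S v)

noncomputable def pick (T : Finset V) (d : V) : V := if h : T.Nonempty then h.choose else d

lemma pick_mem {T : Finset V} (h : T.Nonempty) (d : V) : pick T d ∈ T := by
  rw [pick, dif_pos h]; exact h.choose_spec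

noncomputable def enc (v : V) : ℕ := (Fintype.equivFin V v : ℕ)

noncomputable def dec (d : V) (m : ℕ) : V :=
  if h : m < Fintype.card V then (Fintype.equivFin V).symm ⟨m, h⟩ else d

lemma enc_lt (v : V) : enc v < Fintype.card V := (Fintype.equivFin V v).2

lemma dec_enc (d v : V) : dec d (enc v) = v := by
  rw [dec, dif_pos (enc_lt v)]; simp [enc]

noncomputable def bits (V : Type) [Fintype V] : ℕ := Nat.log 2 (Fintype.card V) + 1

lemma enc_mod (v : V) : enc v % 2 ^ bits V = enc v :=
  Nat.mod_eq_of_lt ((enc_lt v).trans (Nat.lt_pow_succ_log_self one_lt_two _))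

noncomputable def prot (S : Finset V) : Protocol (Finset V) (Finset V) :=
  if hS : S.Nonempty then
    .alice (fun K => decide (lowSet G S K).Nonempty)
      (.bob (fun I => decide (highSet G S I).Nonempty)
        (.leaf false)
        (bsend (bits V) (fun I => enc (pick (highSet G S I) hS.choose))
          (fun m =>
            .alice (fun K => decide (dec hS.choose m ∈ K))
              (if h : dec hS.choose m ∈ S ∧ S.card ≤ 2 * deg G S (dec hS.choose m) then
                 prot (S \ insert (dec hS.choose m)
                        (S.filter (fun u => G.Adj (dec hS.choose m) u)))
               else .leaf false)
              (.leaf true))))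
      (asend (bits V) (fun K => enc (pick (lowSet G S K) hS.choose))
        (fun m =>
          .bob (fun I => decide (dec hS.choose m ∈ I))
            (if h : dec hS.choose m ∈ S ∧ 2 * deg G S (dec hS.choose m) < S.card then
               prot (S.filter (fun u => G.Adj (dec hS.choose m) u))
             else .leaf false)
            (.leaf true)))
  else .leaf false
termination_by S.card
decreasing_by
  · refine Finset.card_lt_card (Finset.sdiff_ssubset ?_ ⟨_, Finset.mem_insert_self _ _⟩)
    exact Finset.insert_subset h.1 (Finset.filter_subset _ _)
  · have := h.2
    simp only [deg] at this
    have hle : (S.filter (fun u => G.Adj (dec hS.choose m) u)).card ≤ 2 * (S.filter (fun u => G.Adj (dec hS.choose m) u)).card := by omega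
    omega

lemma mem_lowSet {S K : Finset V} {v : V} :
    v ∈ lowSet G S K ↔ v ∈ K ∧ v ∈ S ∧ 2 * deg G S v < S.card := by
  simp [lowSet, Finset.mem_filter, Finset.mem_inter, and_assoc]

lemma mem_highSet {S I : Finset V} {v : V} :
    v ∈ highSet G S I ↔ v ∈ I ∧ v ∈ S ∧ S.card ≤ 2 * deg G S v := by
  simp [highSet, Finset.mem_filter, Finset.mem_inter, and_assoc]


lemma eval_alice {α β : Type} (f : α → Bool) (t0 t1 : Protocol α β) (a : α) (b : β) :
    (Protocol.alice f t0 t1).eval a b = if f a then t1.eval a b else t0.eval a b := rfl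

lemma eval_bob {α β : Type} (f : β → Bool) (t0 t1 : Protocol α β) (a : α) (b : β) :
    (Protocol.bob f t0 t1).eval a b = if f b then t1.eval a b else t0.eval a b := rfl

theorem prot_correct (N : ℕ) : ∀ (S : Finset V), S.card ≤ N →
    ∀ K I : Finset V, G.IsClique (K : Set V) →
    (I : Set V).Pairwise (fun u v => ¬ G.Adj u v) →
    ((prot G S).eval K I = true ↔ (K ∩ I ∩ S).Nonempty) := by
  induction N with
  | zero =>
      intro S hcard K I _ _
      have hS : ¬ S.Nonempty := by
        rw [Finset.nonempty_iff_ne_empty]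
        simp [Finset.card_eq_zero.mp (Nat.le_zero.mp hcard)]
      rw [prot, dif_neg hS]
      simp only [Protocol.eval, Finset.not_nonempty_iff_eq_empty.mp hS]
      simp
  | succ n ih =>
      intro S hcard K I hK hI
      rw [prot]
      by_cases hS : S.Nonempty
      · rw [dif_pos hS, eval_alice]
        by_cases hlow : (lowSet G S K).Nonempty
        · rw [if_pos (by simp [hlow])]
          simp only [asend_eval]
          rw [enc_mod, dec_enc]
          set v := pick (lowSet G S K) hS.choose with hv
          have hvm := mem_lowSet G |>.mp (pick_mem hlow hS.choose)
          rw [eval_bob]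
          by_cases hvI : v ∈ I
          · rw [if_pos (by simp [hvI])]
            simp only [Protocol.eval, true_iff]
            exact ⟨v, by simp [Finset.mem_inter, hvm.1, hvI, hvm.2.1]; exact ⟨hvm.1, hvm.2.1⟩⟩
          · rw [if_neg (by simp [hvI])]
            rw [dif_pos ⟨hvm.2.1, hvm.2.2⟩]
            have hlt : 2 * (S.filter (fun u => G.Adj v u)).card < S.card := hvm.2.2
            rw [ih _ (by omega) K I hK hI]
            constructor
            · rintro ⟨u, hu⟩
              simp only [Finset.mem_inter, Finset.mem_filter] at hu
              exact ⟨u, by simp [Finset.mem_inter, hu.1.1, hu.1.2, hu.2.1]⟩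
            · rintro ⟨u, hu⟩
              simp only [Finset.mem_inter] at hu
              have hne : u ≠ v := fun h => hvI (h ▸ hu.1.2)
              have hadj : G.Adj u v := hK hu.1.1 hvm.1 hne
              exact ⟨u, by simp [Finset.mem_inter, Finset.mem_filter, hu.1.1, hu.1.2,
                hu.2, hadj.symm]⟩
        · rw [if_neg (by simp [hlow]), eval_bob]
          by_cases hhigh : (highSet G S I).Nonempty
          · rw [if_pos (by simp [hhigh])]
            simp only [bsend_eval]
            rw [enc_mod, dec_enc]
            set w := pick (highSet G S I) hS.choose with hw
            have hwm := mem_highSet G |>.mp (pick_mem hhigh hS.choose)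
            rw [eval_alice]
            by_cases hwK : w ∈ K
            · rw [if_pos (by simp [hwK])]
              simp only [Protocol.eval, true_iff]
              exact ⟨w, by simp [Finset.mem_inter, hwK, hwm.1, hwm.2.1]; exact ⟨hwm.1, hwm.2.1⟩⟩
            · rw [if_neg (by simp [hwK])]
              rw [dif_pos ⟨hwm.2.1, hwm.2.2⟩]
              have hlt : (S \ insert w (S.filter (fun u => G.Adj w u))).card < S.card :=
                Finset.card_lt_card (Finset.sdiff_ssubset
                  (Finset.insert_subset hwm.2.1 (Finset.filter_subset _ _))
                  ⟨_, Finset.mem_insert_self _ _⟩)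
              rw [ih _ (by omega) K I hK hI]
              constructor
              · rintro ⟨u, hu⟩
                simp only [Finset.mem_inter, Finset.mem_sdiff] at hu
                exact ⟨u, by simp [Finset.mem_inter, hu.1.1, hu.1.2, hu.2.1]⟩
              · rintro ⟨u, hu⟩
                simp only [Finset.mem_inter] at hu
                have hne : u ≠ w := fun h => hwK (h ▸ hu.1.1)
                have hnadj : ¬ G.Adj w u := hI hwm.1 hu.1.2 (Ne.symm hne)
                refine ⟨u, ?_⟩
                simp only [Finset.mem_inter, Finset.mem_sdiff, Finset.mem_insert,
                  Finset.mem_filter]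
                exact ⟨⟨hu.1.1, hu.1.2⟩, hu.2, by tauto⟩
          · rw [if_neg (by simp [hhigh])]
            simp only [Protocol.eval, Bool.false_eq_true, false_iff]
            rintro ⟨u, hu⟩
            simp only [Finset.mem_inter] at hu
            have h1 : u ∉ lowSet G S K := fun h => hlow ⟨u, h⟩
            have h2 : u ∉ highSet G S I := fun h => hhigh ⟨u, h⟩
            rw [mem_lowSet] at h1
            rw [mem_highSet] at h2
            push_neg at h1 h2
            have := h1 hu.1.1 hu.2
            have := h2 hu.1.2 hu.2
            omega
      · rw [dif_neg hS]
        simp only [Protocol.eval, Finset.not_nonempty_iff_eq_empty.mp hS]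
        simp

lemma cost_alice {α β : Type} (f : α → Bool) (t0 t1 : Protocol α β) :
    (Protocol.alice f t0 t1).cost = 1 + max t0.cost t1.cost := rfl

lemma cost_bob {α β : Type} (f : β → Bool) (t0 t1 : Protocol α β) :
    (Protocol.bob f t0 t1).cost = 1 + max t0.cost t1.cost := rfl

lemma cost_leaf {α β : Type} (c : Bool) : (Protocol.leaf c : Protocol α β).cost = 0 := rfl

/-- `blog m = 0` if `m = 0`, else `log₂ m + 1`. -/
def blog (m : ℕ) : ℕ := if m = 0 then 0 else Nat.log 2 m + 1

lemma blog_le {a b : ℕ} (h : 2 * a < b) : blog a ≤ Nat.log 2 b := by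
  rcases Nat.eq_zero_or_pos a with ha | ha
  · simp [blog, ha]
  · rw [blog, if_neg (by omega)]
    have : Nat.log 2 (a * 2) = Nat.log 2 a + 1 := Nat.log_mul_base one_lt_two (by omega)
    rw [← this]
    exact Nat.log_mono_right (by omega)

theorem prot_cost (N : ℕ) : ∀ S : Finset V, S.card ≤ N →
    (prot G S).cost ≤ (bits V + 3) * blog S.card := by
  induction N with
  | zero =>
      intro S hcard
      have hS : ¬ S.Nonempty := by
        rw [Finset.nonempty_iff_ne_empty]
        simp [Finset.card_eq_zero.mp (Nat.le_zero.mp hcard)]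
      rw [prot, dif_neg hS]
      simp [Protocol.cost]
  | succ n ih =>
      intro S hcard
      rw [prot]
      by_cases hS : S.Nonempty
      · rw [dif_pos hS, cost_alice]
        set k := bits V with hk
        set M := Nat.log 2 S.card with hM
        -- bound for the low (alice-sends) branch continuation
        have hA : ∀ m, (Protocol.bob
              (fun I => decide (dec hS.choose m ∈ I))
              (if h : dec hS.choose m ∈ S ∧ 2 * deg G S (dec hS.choose m) < S.card then
                 prot G (S.filter (fun u => G.Adj (dec hS.choose m) u))
               else Protocol.leaf false)
              (Protocol.leaf true)).cost ≤ 1 + (k + 3) * M := by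
          intro m
          rw [cost_bob]
          set w := dec hS.choose m
          have hb : (if h : w ∈ S ∧ 2 * deg G S w < S.card then
              prot G (S.filter (fun u => G.Adj w u))
            else Protocol.leaf false).cost ≤ (k + 3) * M := by
            split
            · rename_i h
              have hdeg : deg G S w = (S.filter (fun u => G.Adj w u)).card := rfl
              have hlt : 2 * (S.filter (fun u => G.Adj w u)).card < S.card := by
                rw [← hdeg]; exact h.2
              calc (prot G (S.filter (fun u => G.Adj w u))).cost
                  ≤ (k + 3) * blog (S.filter (fun u => G.Adj w u)).card :=
                    ih _ (by omega)
                _ ≤ (k + 3) * M := Nat.mul_le_mul_left _ (blog_le hlt)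
            · simp [Protocol.cost]
          simp only [Protocol.cost]
          omega
        -- bound for the high (bob-sends) branch continuation
        have hB : ∀ m, (Protocol.alice
              (fun K => decide (dec hS.choose m ∈ K))
              (if h : dec hS.choose m ∈ S ∧ S.card ≤ 2 * deg G S (dec hS.choose m) then
                 prot G (S \ insert (dec hS.choose m)
                   (S.filter (fun u => G.Adj (dec hS.choose m) u)))
               else Protocol.leaf false)
              (Protocol.leaf true)).cost ≤ 1 + (k + 3) * M := by
          intro m
          rw [cost_alice]
          set w := dec hS.choose m
          have hb : (if h : w ∈ S ∧ S.card ≤ 2 * deg G S w then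
              prot G (S \ insert w (S.filter (fun u => G.Adj w u)))
            else Protocol.leaf false).cost ≤ (k + 3) * M := by
            split
            · rename_i h
              set F := S.filter (fun u => G.Adj w u) with hF
              have hwF : w ∉ F := by
                rw [hF]; simp [G.irrefl]
              have hsub : insert w F ⊆ S :=
                Finset.insert_subset h.1 (Finset.filter_subset _ _)
              have hci : (insert w F).card = deg G S w + 1 := by
                rw [Finset.card_insert_of_notMem hwF]; rfl
              have hcd : (S \ insert w F).card = S.card - (insert w F).card :=
                Finset.card_sdiff_of_subset hsub
              have hle : (insert w F).card ≤ S.card := Finset.card_le_card hsub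
              have hlt : 2 * (S \ insert w F).card < S.card := by
                have := h.2; omega
              calc (prot G (S \ insert w F)).cost
                  ≤ (k + 3) * blog (S \ insert w F).card := ih _ (by omega)
                _ ≤ (k + 3) * M := Nat.mul_le_mul_left _ (blog_le hlt)
            · simp [Protocol.cost]
          simp only [Protocol.cost]
          omega
        have hct : (asend k (fun K => enc (pick (lowSet G S K) hS.choose))
            (fun m => Protocol.bob (fun I => decide (dec hS.choose m ∈ I))
              (if h : dec hS.choose m ∈ S ∧ 2 * deg G S (dec hS.choose m) < S.card then
                 prot G (S.filter (fun u => G.Adj (dec hS.choose m) u))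
               else Protocol.leaf false)
              (Protocol.leaf true))).cost ≤ k + (1 + (k + 3) * M) :=
          asend_cost _ _ _ _ hA
        have hcf : (bsend k (fun I => enc (pick (highSet G S I) hS.choose))
            (fun m => Protocol.alice (fun K => decide (dec hS.choose m ∈ K))
              (if h : dec hS.choose m ∈ S ∧ S.card ≤ 2 * deg G S (dec hS.choose m) then
                 prot G (S \ insert (dec hS.choose m)
                   (S.filter (fun u => G.Adj (dec hS.choose m) u)))
               else Protocol.leaf false)
              (Protocol.leaf true))).cost ≤ k + (1 + (k + 3) * M) :=
          bsend_cost _ _ _ _ hB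
        rw [cost_bob]
        have hblog : blog S.card = M + 1 := by
          rw [blog, if_neg (by simpa [Finset.card_eq_zero, ← Finset.nonempty_iff_ne_empty]
            using Finset.card_ne_zero_of_mem hS.choose_spec)]
        rw [hblog, Nat.mul_succ, cost_leaf]
        omega
      · rw [dif_neg hS]
        simp [Protocol.cost]

end CIS

theorem clique_vs_independent_set :
    ∃ C : ℕ, ∀ (n : ℕ) (V : Type) (_ : Fintype V) (_ : DecidableEq V),
      Fintype.card V = n → ∀ G : SimpleGraph V,
      ∃ P : Protocol (Finset V) (Finset V),
        P.cost ≤ C * (Nat.log 2 n + 1) ^ 2 ∧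
        ∀ K I : Finset V, G.IsClique (K : Set V) →
          (I : Set V).Pairwise (fun u v => ¬ G.Adj u v) →
          (P.eval K I = true ↔ (K ∩ I).Nonempty) := by
  refine ⟨4, ?_⟩
  intro n V _ _ hcard G
  refine ⟨CIS.prot G Finset.univ, ?_, ?_⟩
  · have h1 := CIS.prot_cost G (Finset.univ : Finset V).card Finset.univ le_rfl
    have hb : CIS.bits V = Nat.log 2 n + 1 := by rw [CIS.bits, hcard]
    have h2 : CIS.blog (Finset.univ : Finset V).card ≤ Nat.log 2 n + 1 := by
      rw [CIS.blog]
      split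
      · omega
      · rw [Finset.card_univ, hcard]
    set x := Nat.log 2 n
    have h3 : (CIS.prot G Finset.univ).cost ≤ (x + 1 + 3) * (x + 1) := by
      calc (CIS.prot G Finset.univ).cost
          ≤ (CIS.bits V + 3) * CIS.blog (Finset.univ : Finset V).card := h1
        _ ≤ (x + 1 + 3) * (x + 1) := by
            rw [hb]; exact Nat.mul_le_mul_left _ h2
    nlinarith [h3]
  · intro K I hK hI
    have h := CIS.prot_correct G (Finset.univ : Finset V).card Finset.univ le_rfl K I hK hI
    simpa [Finset.inter_univ] using h
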